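/- Let φ : [α₁,α₂] → [β₁,β₂] be a continuous strictly increasing bijection with inverse ψ : [β₁,β₂] → [α₁,α₂], and define F(a,b) = ∫_{α₁}^{a} φ(x) dx + ∫_{β₁}^{b} ψ(x) dx − a·b + α₁·β₁. Then for every a ∈ [α₁,α₂] and b ∈ [β₁,β₂] one has the identity F(a,b) + F(ψ(b), φ(a)) = −(ψ(b) − a)·(φ(a) − b). -/

import Mathlib

open Set intervalIntegral

/-- Young's equality for a monotone function and its inverse, proved via
equally-spaced telescoping sums (no differentiability needed). -/
lemma young_equality
    (α₁ α₂ β₁ β₂ : ℝ) (φ ψ : ℝ → ℝ)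
    (hφm : MonotoneOn φ (Icc α₁ α₂))
    (hψm : MonotoneOn ψ (Icc β₁ β₂))
    (hφmaps : MapsTo φ (Icc α₁ α₂) (Icc β₁ β₂))
    (hinvL : ∀ x ∈ Icc α₁ α₂, ψ (φ x) = x)
    (hφα₁ : φ α₁ = β₁)
    (a : ℝ) (ha : a ∈ Icc α₁ α₂) :
    (∫ x in α₁..a, φ x) + (∫ x in β₁..(φ a), ψ x) = a * φ a - α₁ * β₁ := by
  obtain ⟨ha1, ha2⟩ := ha
  -- integrability helpers
  have hIφ : ∀ p q : ℝ, α₁ ≤ p → p ≤ q → q ≤ α₂ → IntervalIntegrable φ MeasureTheory.volume p q := by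
    intro p q h1 h2 h3
    exact (hφm.mono (by rw [uIcc_of_le h2]; exact Icc_subset_Icc h1 h3)).intervalIntegrable
  have hIψ : ∀ p q : ℝ, β₁ ≤ p → p ≤ q → q ≤ β₂ → IntervalIntegrable ψ MeasureTheory.volume p q := by
    intro p q h1 h2 h3
    exact (hψm.mono (by rw [uIcc_of_le h2]; exact Icc_subset_Icc h1 h3)).intervalIntegrable
  set G : ℝ → ℝ := fun t => (∫ x in α₁..t, φ x) + (∫ x in β₁..(φ t), ψ x) - t * φ t + α₁ * β₁
    with hG
  -- the per-interval bound
  have step : ∀ s t : ℝ, α₁ ≤ s → s ≤ t → t ≤ α₂ →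
      |G t - G s| ≤ (t - s) * (φ t - φ s) := by
    intro s t h1 h2 h3
    have hsmem : s ∈ Icc α₁ α₂ := ⟨h1, h2.trans h3⟩
    have htmem : t ∈ Icc α₁ α₂ := ⟨h1.trans h2, h3⟩
    have hφs := hφmaps hsmem
    have hφt := hφmaps htmem
    have hφst : φ s ≤ φ t := hφm hsmem htmem h2
    have e1 : (∫ x in α₁..t, φ x) - (∫ x in α₁..s, φ x) = ∫ x in s..t, φ x := by
      rw [← intervalIntegral.integral_add_adjacent_intervals
        (hIφ α₁ s le_rfl h1 hsmem.2) (hIφ s t h1 h2 h3)]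
      ring
    have e2 : (∫ x in β₁..(φ t), ψ x) - (∫ x in β₁..(φ s), ψ x) = ∫ x in (φ s)..(φ t), ψ x := by
      rw [← intervalIntegral.integral_add_adjacent_intervals
        (hIψ β₁ (φ s) le_rfl hφs.1 hφs.2) (hIψ (φ s) (φ t) hφs.1 hφst hφt.2)]
      ring
    have hGdiff : G t - G s = (∫ x in s..t, φ x) + (∫ x in (φ s)..(φ t), ψ x)
        - t * φ t + s * φ s := by
      rw [hG]; simp only []
      rw [← e1, ← e2]; ring
    -- bounds for first integral
    have b1l : (t - s) * φ s ≤ ∫ x in s..t, φ x := by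
      have := intervalIntegral.integral_mono_on h2 (_root_.intervalIntegrable_const (c := φ s))
        (hIφ s t h1 h2 h3) (fun x hx => hφm hsmem ⟨h1.trans hx.1, hx.2.trans h3⟩ hx.1)
      simpa using this
    have b1u : (∫ x in s..t, φ x) ≤ (t - s) * φ t := by
      have := intervalIntegral.integral_mono_on h2 (hIφ s t h1 h2 h3)
        (_root_.intervalIntegrable_const (c := φ t))
        (fun x hx => hφm ⟨h1.trans hx.1, hx.2.trans h3⟩ htmem hx.2)
      simpa using this
    -- bounds for second integral
    have b2l : (φ t - φ s) * s ≤ ∫ x in (φ s)..(φ t), ψ x := by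
      have := intervalIntegral.integral_mono_on hφst (_root_.intervalIntegrable_const (c := s))
        (hIψ (φ s) (φ t) hφs.1 hφst hφt.2)
        (fun y hy => by
          have hymem : y ∈ Icc β₁ β₂ := ⟨hφs.1.trans hy.1, hy.2.trans hφt.2⟩
          have := hψm hφs hymem hy.1
          rwa [hinvL s hsmem] at this)
      simpa using this
    have b2u : (∫ x in (φ s)..(φ t), ψ x) ≤ (φ t - φ s) * t := by
      have := intervalIntegral.integral_mono_on hφst
        (hIψ (φ s) (φ t) hφs.1 hφst hφt.2) (_root_.intervalIntegrable_const (c := t))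
        (fun y hy => by
          have hymem : y ∈ Icc β₁ β₂ := ⟨hφs.1.trans hy.1, hy.2.trans hφt.2⟩
          have := hψm hymem hφt hy.2
          rwa [hinvL t htmem] at this)
      simpa using this
    rw [hGdiff, abs_le]
    constructor <;> nlinarith
  -- G α₁ = 0
  have hG0 : G α₁ = 0 := by
    rw [hG]; simp [hφα₁]
  -- bound |G a| by telescoping with n equal pieces
  have key : ∀ n : ℕ, 0 < n → |G a| ≤ (a - α₁) * (φ a - β₁) / n := by
    intro n hn
    have hn' : (n : ℝ) ≠ 0 := Nat.cast_ne_zero.mpr hn.ne'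
    set d : ℝ := (a - α₁) / n with hd
    have hd0 : 0 ≤ d := div_nonneg (by linarith) (Nat.cast_nonneg n)
    set t : ℕ → ℝ := fun i => α₁ + i * d with ht
    have htn : t n = a := by simp only [ht, hd]; field_simp; ring
    have ht0 : t 0 = α₁ := by simp [ht]
    have htmono : ∀ i j : ℕ, i ≤ j → t i ≤ t j := by
      intro i j hij
      have : (i : ℝ) ≤ j := Nat.cast_le.mpr hij
      simp only [ht]
      nlinarith
    have htmem : ∀ i : ℕ, i ≤ n → α₁ ≤ t i ∧ t i ≤ α₂ := by
      intro i hi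
      constructor
      · rw [← ht0]; exact htmono 0 i (Nat.zero_le i)
      · calc t i ≤ t n := htmono i n hi
          _ = a := htn
          _ ≤ α₂ := ha2
    have tel : G a = ∑ i ∈ Finset.range n, (G (t (i + 1)) - G (t i)) := by
      rw [Finset.sum_range_sub (fun i => G (t i)), htn, ht0, hG0, sub_zero]
    have hsum : |G a| ≤ ∑ i ∈ Finset.range n, (d * (φ (t (i + 1)) - φ (t i))) := by
      rw [tel]
      refine (Finset.abs_sum_le_sum_abs _ _).trans (Finset.sum_le_sum ?_)
      intro i hi
      have hi' : i + 1 ≤ n := Finset.mem_range.mp hi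
      have h1 := (htmem i (Nat.le_of_succ_le hi')).1
      have h3 := (htmem (i + 1) hi').2
      have h2 : t i ≤ t (i + 1) := htmono i (i + 1) (Nat.le_succ i)
      have hdiff : t (i + 1) - t i = d := by simp [ht]; ring
      have := step (t i) (t (i + 1)) h1 h2 h3
      rwa [hdiff] at this
    have hsum2 : ∑ i ∈ Finset.range n, (d * (φ (t (i + 1)) - φ (t i)))
        = d * (φ a - β₁) := by
      rw [← Finset.mul_sum, Finset.sum_range_sub (fun i => φ (t i)), htn, ht0, hφα₁]
    rw [hsum2] at hsum
    calc |G a| ≤ d * (φ a - β₁) := hsum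
      _ = (a - α₁) * (φ a - β₁) / n := by rw [hd]; ring
  -- conclude G a = 0
  have hGa : G a = 0 := by
    by_contra h
    have habs : 0 < |G a| := abs_pos.mpr h
    set C : ℝ := (a - α₁) * (φ a - β₁) with hC
    obtain ⟨n, hn⟩ := exists_nat_gt (C / |G a|)
    have hn0 : 0 < n := by
      by_contra h0
      push_neg at h0
      interval_cases n
      have hC0 : 0 ≤ C := by
        have := hφmaps ⟨ha1, ha2⟩
        have : β₁ ≤ φ a := this.1
        nlinarith
      simp at hn
      nlinarith [div_nonneg hC0 habs.le]
    have := key n hn0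
    have hnR : (0:ℝ) < n := Nat.cast_pos.mpr hn0
    rw [div_lt_iff₀ habs] at hn
    have : |G a| ≤ C / n := this
    rw [le_div_iff₀ hnR] at this
    nlinarith
  have : (∫ x in α₁..a, φ x) + (∫ x in β₁..(φ a), ψ x) - a * φ a + α₁ * β₁ = 0 := hGa
  linarith

theorem young_reflection_identity
    (α₁ α₂ β₁ β₂ : ℝ) (φ ψ : ℝ → ℝ)
    (hα : α₁ < α₂) (hβ : β₁ < β₂)
    (hcont : ContinuousOn φ (Icc α₁ α₂))
    (hmono : StrictMonoOn φ (Icc α₁ α₂))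
    (hbij : BijOn φ (Icc α₁ α₂) (Icc β₁ β₂))
    (hinvL : ∀ x ∈ Icc α₁ α₂, ψ (φ x) = x)
    (hinvR : ∀ y ∈ Icc β₁ β₂, φ (ψ y) = y)
    (hψmaps : MapsTo ψ (Icc β₁ β₂) (Icc α₁ α₂))
    (a b : ℝ) (ha : a ∈ Icc α₁ α₂) (hb : b ∈ Icc β₁ β₂) :
    ((∫ x in α₁..a, φ x) + (∫ x in β₁..b, ψ x) - a * b + α₁ * β₁) +
    ((∫ x in α₁..(ψ b), φ x) + (∫ x in β₁..(φ a), ψ x) - (ψ b) * (φ a) + α₁ * β₁)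
      = -(ψ b - a) * (φ a - b) := by
  have hφm : MonotoneOn φ (Icc α₁ α₂) := hmono.monotoneOn
  have hφmaps : MapsTo φ (Icc α₁ α₂) (Icc β₁ β₂) := hbij.mapsTo
  have hα₁ : α₁ ∈ Icc α₁ α₂ := ⟨le_rfl, hα.le⟩
  have hψm : MonotoneOn ψ (Icc β₁ β₂) := by
    intro y₁ h₁ y₂ h₂ h12
    by_contra h
    push_neg at h
    have := hmono (hψmaps h₂) (hψmaps h₁) h
    rw [hinvR y₁ h₁, hinvR y₂ h₂] at this
    linarith
  have hφα₁ : φ α₁ = β₁ := by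
    have h1 : β₁ ≤ φ α₁ := (hφmaps hα₁).1
    have h2 : φ α₁ ≤ β₁ := by
      have hm : ψ β₁ ∈ Icc α₁ α₂ := hψmaps ⟨le_rfl, hβ.le⟩
      have := hφm hα₁ hm hm.1
      rwa [hinvR β₁ ⟨le_rfl, hβ.le⟩] at this
    linarith
  have Y1 := young_equality α₁ α₂ β₁ β₂ φ ψ hφm hψm hφmaps hinvL hφα₁ a ha
  have Y2 := young_equality α₁ α₂ β₁ β₂ φ ψ hφm hψm hφmaps hinvL hφα₁ (ψ b) (hψmaps hb)
  rw [hinvR b hb] at Y2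
  linear_combination Y1 + Y2
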